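/- Let A be a reduced commutative ring whose spectrum Spec A is connected. Then every unit u of the Laurent series ring A((z)) = A⟦z⟧[1/z] can be written as u = z^m·w for some integer m and some unit w of the power series ring A⟦z⟧. -/

import Mathlib

noncomputable section

open scoped Classical

namespace HVpaper

variable {A : Type*} [CommRing A]

/-- Coefficientwise `q`-th power map on formal Laurent series (the map `σ` for `q ≠ 0`;
junk value `0` for `q = 0`). -/
def laurentFrob (q : ℕ) (x : LaurentSeries A) : LaurentSeries A :=
  if hq : q = 0 then 0 else x.map (ZeroHom.mk (fun a : A => a ^ q) (zero_pow hq))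

/-- Entrywise `σ` on matrices of Laurent series. -/
def matFrob (q : ℕ) {n : Type*} (M : Matrix n n (LaurentSeries A)) :
    Matrix n n (LaurentSeries A) :=
  M.map (laurentFrob q)

/-- `x` lies in `z^n · A⟦z⟧`, i.e. all coefficients below `n` vanish. -/
def InZPow (n : ℤ) (x : LaurentSeries A) : Prop :=
  ∀ m : ℤ, m < n → x.coeff m = 0

/-- `x` lies in the subring `A⟦z⟧` of `A((z))`. -/
def InPS (x : LaurentSeries A) : Prop :=
  ∀ m : ℤ, m < 0 → x.coeff m = 0

/-- `u` is a unit of the subring `A⟦z⟧` of `A((z))`. -/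
def IsPSUnit (u : LaurentSeries A) : Prop :=
  InPS u ∧ ∃ v : LaurentSeries A, InPS v ∧ u * v = 1

/-- The element `z^n` of `A((z))`. -/
def zPow (n : ℤ) : LaurentSeries A :=
  HahnSeries.single n 1

/-- The coefficientwise map on Laurent series induced by a ring homomorphism. -/
def lmap {B : Type*} [CommRing B] (f : A →+* B) (x : LaurentSeries A) : LaurentSeries B :=
  x.map f

variable {k : Type*} [Field k]

/-- Membership in the subgroup `I_n` of `GL_r(k⟦z⟧)`:  `g` and its inverse have entries in
`k⟦z⟧`, `g ≡ 1 mod z^n` on the diagonal, the entries above the diagonal lie in `z^n k⟦z⟧` and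
those below the diagonal lie in `z^(n+1) k⟦z⟧`.  For `n = 0` this is the standard Iwahori
subgroup. -/
def InIwahori {r : ℕ} (n : ℕ) (g : Matrix (Fin r) (Fin r) (LaurentSeries k)) : Prop :=
  (∀ i j, InPS (g i j)) ∧ IsUnit g ∧ (∀ i j, InPS (g⁻¹ i j)) ∧
  (∀ i : Fin r, InZPow (n : ℤ) (g i i - 1)) ∧
  (∀ i j : Fin r, i < j → InZPow (n : ℤ) (g i j)) ∧
  (∀ i j : Fin r, j < i → InZPow ((n : ℤ) + 1) (g i j))

/-- The sum of the `i` smallest (i.e. last `i`) entries of the nonincreasing tuple `μ`. -/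
def lowSum {r : ℕ} (μ : Fin r → ℤ) (i : ℕ) : ℤ :=
  ∑ j : Fin r, if r ≤ (j : ℕ) + i then μ j else 0

/-- The matrix `M` over `A((z))` is bounded by the dominant cocharacter
`μ = (μ 0 ≥ … ≥ μ (r-1))` of `GL_r`: for each `1 ≤ i ≤ r` every `i×i` minor of `M` lies in
`z^(μ_{r-i+1}+⋯+μ_r)·A⟦z⟧` and `det M = z^(μ_1+⋯+μ_r)` times a unit of `A⟦z⟧`. -/
def BoundedBy {r : ℕ} (μ : Fin r → ℤ) (M : Matrix (Fin r) (Fin r) (LaurentSeries A)) : Prop :=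
  (∀ i : Fin r, ∀ ri ci : Fin ((i : ℕ) + 1) → Fin r,
    InZPow (lowSum μ ((i : ℕ) + 1)) ((M.submatrix ri ci).det)) ∧
  (∃ u : LaurentSeries A, IsPSUnit u ∧ M.det = zPow (∑ j, μ j) * u)


section LaurentUnitAux

private lemma exists_coeff_not_mem (U V : LaurentSeries A) (hUV : U * V = 1)
    (p : PrimeSpectrum A) : ∃ n : ℤ, U.coeff n ∉ p.asIdeal := by
  by_contra h
  push_neg at h
  have hmem : (U * V).coeff 0 ∈ p.asIdeal := by
    rw [HahnSeries.coeff_mul]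
    exact Ideal.sum_mem _ fun ij _ => Ideal.mul_mem_right _ _ (h ij.1)
  rw [hUV] at hmem
  simp only [HahnSeries.coeff_one, if_pos rfl] at hmem
  exact p.isPrime.ne_top (Ideal.eq_top_of_isUnit_mem _ hmem isUnit_one)

private lemma exists_least_coeff (U V : LaurentSeries A) (hUV : U * V = 1)
    (p : PrimeSpectrum A) :
    ∃ m : ℤ, U.coeff m ∉ p.asIdeal ∧ ∀ k < m, U.coeff k ∈ p.asIdeal := by
  obtain ⟨m, hm, hmin⟩ := Int.exists_least_of_bdd
    (P := fun n => U.coeff n ∉ p.asIdeal)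
    ⟨U.order, fun z hz => HahnSeries.order_le_of_coeff_ne_zero
      (fun h0 => hz (h0 ▸ Ideal.zero_mem _))⟩
    (exists_coeff_not_mem U V hUV p)
  exact ⟨m, hm, fun k hk => by_contra fun hc => absurd (hmin k hc) (not_le.2 hk)⟩

private lemma orders_add_eq_zero (U V : LaurentSeries A) (hUV : U * V = 1)
    (p : PrimeSpectrum A) {m m' : ℤ}
    (hU : U.coeff m ∉ p.asIdeal) (hUm : ∀ k < m, U.coeff k ∈ p.asIdeal)
    (hV : V.coeff m' ∉ p.asIdeal) (hVm : ∀ k < m', V.coeff k ∈ p.asIdeal) :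
    m + m' = 0 := by
  have hmem : ((m, m') : ℤ × ℤ) ∈
      Finset.antidiagonal U.isPWO_support V.isPWO_support (m + m') := by
    rw [Finset.mem_antidiagonal]
    exact ⟨(U.mem_support m).2 fun h0 => hU (h0 ▸ Ideal.zero_mem _),
      (V.mem_support m').2 fun h0 => hV (h0 ▸ Ideal.zero_mem _), rfl⟩
  have hco : (U * V).coeff (m + m') ∉ p.asIdeal := by
    intro hin
    rw [HahnSeries.coeff_mul, ← Finset.add_sum_erase _ _ hmem] at hin
    have hrest : ∑ ij ∈ (Finset.antidiagonal U.isPWO_support V.isPWO_support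
        (m + m')).erase (m, m'), U.coeff ij.1 * V.coeff ij.2 ∈ p.asIdeal := by
      refine Ideal.sum_mem _ fun ij hij => ?_
      obtain ⟨hne, hij⟩ := Finset.mem_erase.1 hij
      rw [Finset.mem_antidiagonal] at hij
      have hsum : ij.1 + ij.2 = m + m' := hij.2.2
      by_cases h1 : ij.1 < m
      · exact Ideal.mul_mem_right _ _ (hUm _ h1)
      · have h2 : ij.2 < m' := by
          rcases lt_or_eq_of_le (not_lt.1 h1) with h | h
          · omega
          · exact absurd (Prod.ext h.symm (by omega)) hne
        exact Ideal.mul_mem_left _ _ (hVm _ h2)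
    have : U.coeff m * V.coeff m' ∈ p.asIdeal :=
      (Ideal.add_mem_iff_left _ hrest).mp hin
    rcases p.isPrime.mem_or_mem this with h | h
    exacts [hU h, hV h]
  by_contra hne
  apply hco
  rw [hUV, HahnSeries.coeff_one, if_neg hne]
  exact Ideal.zero_mem _

end LaurentUnitAux

/-- The determinant content, for `G = GL_r`, of the Lemma following Proposition 2.11:  over a
reduced ring `A` with connected spectrum, every unit of `A((z))` is `z^m` times a unit of
`A⟦z⟧`. -/
theorem unit_of_laurent_eq_zpow_mul_unit
    {A : Type*} [CommRing A] [IsReduced A] [ConnectedSpace (PrimeSpectrum A)]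
    (u : (LaurentSeries A)ˣ) :
    ∃ (m : ℤ) (w : LaurentSeries A), IsPSUnit w ∧ (u : LaurentSeries A) = zPow m * w := by
  classical
  set U : LaurentSeries A := (u : LaurentSeries A) with hUdef
  set V : LaurentSeries A := ((u⁻¹ : (LaurentSeries A)ˣ) : LaurentSeries A) with hVdef
  have hUV : U * V = 1 := u.mul_inv
  have hVU : V * U = 1 := u.inv_mul
  choose f hf1 hf2 using exists_least_coeff U V hUV
  choose g hg1 hg2 using exists_least_coeff V U hVU
  have hfg : ∀ p : PrimeSpectrum A, f p + g p = 0 := fun p =>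
    orders_add_eq_zero U V hUV p (hf1 p) (hf2 p) (hg1 p) (hg2 p)
  -- characterization of level sets
  have hchar : ∀ (p : PrimeSpectrum A) (n : ℤ), f p = n ↔
      ((∀ k < n, U.coeff k ∈ p.asIdeal) ∧ (∀ k < -n, V.coeff k ∈ p.asIdeal)) := by
    intro p n
    constructor
    · rintro rfl
      refine ⟨hf2 p, fun k hk => hg2 p k (by have := hfg p; omega)⟩
    · rintro ⟨h1, h2⟩
      have hge : ¬ f p < n := fun h => hf1 p (h1 _ h)
      have hle : ¬ n < f p := fun h => hg1 p (h2 _ (by have := hfg p; omega))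
      omega
  -- bounds
  have hbdd : ∀ p : PrimeSpectrum A, f p ∈ Finset.Icc U.order (-V.order) := by
    intro p
    rw [Finset.mem_Icc]
    constructor
    · exact HahnSeries.order_le_of_coeff_ne_zero
        (fun h0 => hf1 p (h0 ▸ Ideal.zero_mem _))
    · have : V.order ≤ g p := HahnSeries.order_le_of_coeff_ne_zero
        (fun h0 => hg1 p (h0 ▸ Ideal.zero_mem _))
      have := hfg p; omega
  -- level sets are closed
  have hclosed : ∀ n : ℤ, IsClosed {p : PrimeSpectrum A | f p = n} := by
    intro n
    have heq : {p : PrimeSpectrum A | f p = n} =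
        (⋂ k ∈ {k : ℤ | k < n}, PrimeSpectrum.zeroLocus {U.coeff k}) ∩
        (⋂ k ∈ {k : ℤ | k < -n}, PrimeSpectrum.zeroLocus {V.coeff k}) := by
      ext p
      simp only [Set.mem_setOf_eq, Set.mem_inter_iff, Set.mem_iInter,
        PrimeSpectrum.mem_zeroLocus, Set.singleton_subset_iff, SetLike.mem_coe, hchar p n]
    rw [heq]
    exact ((isClosed_biInter fun k _ => PrimeSpectrum.isClosed_zeroLocus _).inter
      (isClosed_biInter fun k _ => PrimeSpectrum.isClosed_zeroLocus _))
  obtain ⟨p₀⟩ : Nonempty (PrimeSpectrum A) := inferInstance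
  set m := f p₀ with hm
  -- level set of m is open
  have hopen : IsOpen {p : PrimeSpectrum A | f p = m} := by
    rw [← isClosed_compl_iff]
    have heq : {p : PrimeSpectrum A | f p = m}ᶜ =
        ⋃ k ∈ ((Finset.Icc U.order (-V.order)).erase m : Finset ℤ),
          {p : PrimeSpectrum A | f p = k} := by
      ext p
      simp only [Set.mem_compl_iff, Set.mem_setOf_eq, Set.mem_iUnion, Finset.mem_erase]
      constructor
      · intro h
        exact ⟨f p, ⟨⟨h, hbdd p⟩, rfl⟩⟩
      · rintro ⟨k, ⟨hk, _⟩, rfl⟩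
        exact hk
    rw [heq]
    exact Set.Finite.isClosed_biUnion (Finset.finite_toSet _) fun k _ => hclosed k
  have huniv : {p : PrimeSpectrum A | f p = m} = Set.univ :=
    IsClopen.eq_univ ⟨hclosed m, hopen⟩ ⟨p₀, rfl⟩
  have hall : ∀ p : PrimeSpectrum A, f p = m := fun p =>
    (Set.eq_univ_iff_forall.1 huniv) p
  -- vanishing of low coefficients
  have hUcoeff : ∀ k < m, U.coeff k = 0 := by
    intro k hk
    have hnil : IsNilpotent (U.coeff k) := nilpotent_iff_mem_prime.2 fun J hJ => by
      have := hall ⟨J, hJ⟩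
      exact hf2 ⟨J, hJ⟩ k (by omega)
    exact hnil.eq_zero
  have hVcoeff : ∀ k < -m, V.coeff k = 0 := by
    intro k hk
    have hnil : IsNilpotent (V.coeff k) := nilpotent_iff_mem_prime.2 fun J hJ => by
      have h1 := hall ⟨J, hJ⟩
      have h2 := hfg ⟨J, hJ⟩
      exact hg2 ⟨J, hJ⟩ k (by omega)
    exact hnil.eq_zero
  -- assemble
  have hzz : ∀ a b : ℤ, (zPow a : LaurentSeries A) * zPow b = zPow (a + b) := by
    intro a b
    rw [zPow, zPow, zPow, HahnSeries.single_mul_single, one_mul]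
  have hz1 : (zPow 0 : LaurentSeries A) = 1 := by
    rw [zPow]; exact HahnSeries.single_zero_one
  have hcoeff_shift : ∀ (x : LaurentSeries A) (a b : ℤ),
      ((zPow b : LaurentSeries A) * x).coeff (a + b) = x.coeff a := by
    intro x a b
    rw [zPow, HahnSeries.coeff_single_mul_add, one_mul]
  refine ⟨m, zPow (-m) * U, ⟨?_, ⟨zPow m * V, ?_, ?_⟩⟩, ?_⟩
  · intro n hn
    have := hcoeff_shift U (n + m) (-m)
    rw [show n + m + -m = n by ring] at this
    rw [this]
    exact hUcoeff _ (by omega)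
  · intro n hn
    have := hcoeff_shift V (n - m) m
    rw [show n - m + m = n by ring] at this
    rw [this]
    exact hVcoeff _ (by omega)
  · calc (zPow (-m) * U) * (zPow m * V)
        = ((zPow (-m) : LaurentSeries A) * zPow m) * (U * V) := by ring
      _ = 1 := by rw [hzz, hUV, neg_add_cancel, hz1, one_mul]
  · rw [← mul_assoc, hzz, add_neg_cancel, hz1, one_mul]

end HVpaper
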